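/- For any topological group G, the set of compact subgroups 𝒮(G) = {K ∈ 𝒦(G) : K is a subgroup of G} is closed in 𝒦(G) with the Vietoris topology. -/

import Mathlib

open TopologicalSpace

/-- The Vietoris topology on the space of nonempty compact subsets of a topological space:
it is generated by the sets `{K : K ⊆ U}` and `{K : K ∩ U ≠ ∅}` for `U` open. -/
def vietorisTopology (X : Type*) [TopologicalSpace X] :
    TopologicalSpace (NonemptyCompacts X) :=
  TopologicalSpace.generateFrom
    ({S | ∃ U : Set X, IsOpen U ∧ S = {K : NonemptyCompacts X | (K : Set X) ⊆ U}} ∪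
     {S | ∃ U : Set X, IsOpen U ∧ S = {K : NonemptyCompacts X | ((K : Set X) ∩ U).Nonempty}})

/-- For a (Hausdorff) topological group `G`, the set of compact subgroups is closed in the
space of nonempty compact subsets of `G` with the Vietoris topology. -/
theorem isClosed_compactSubgroups {G : Type*} [Group G] [TopologicalSpace G]
    [IsTopologicalGroup G] [T2Space G] :
    @IsClosed (NonemptyCompacts G) (vietorisTopology G)
      {K : NonemptyCompacts G | ∃ H : Subgroup G, (K : Set G) = (H : Set G)} := by
  letI : TopologicalSpace (NonemptyCompacts G) := vietorisTopology G
  rw [← isOpen_compl_iff, isOpen_iff_forall_mem_open]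
  intro K hK
  -- K is not a subgroup: find a, b ∈ K with a * b⁻¹ ∉ K
  obtain ⟨a, ha, b, hb, hab⟩ :
      ∃ a ∈ (K : Set G), ∃ b ∈ (K : Set G), a * b⁻¹ ∉ (K : Set G) := by
    by_contra h
    push_neg at h
    exact hK ⟨Subgroup.ofDiv (K : Set G) K.nonempty h, rfl⟩
  -- separate a * b⁻¹ from K
  obtain ⟨U, V, hU, hV, hKU, habV, hdis⟩ :=
    K.isCompact.separation_of_notMem hab
  -- continuity of (x, y) ↦ x * y⁻¹ at (a, b)
  have hcont : Continuous fun p : G × G => p.1 * p.2⁻¹ := by continuity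
  have hpre : IsOpen ((fun p : G × G => p.1 * p.2⁻¹) ⁻¹' V) := hV.preimage hcont
  obtain ⟨W₁, W₂, hW₁, hW₂, haW₁, hbW₂, hWV⟩ :=
    isOpen_prod_iff.mp hpre a b habV
  refine ⟨{K' : NonemptyCompacts G | (K' : Set G) ⊆ U} ∩
      {K' : NonemptyCompacts G | ((K' : Set G) ∩ W₁).Nonempty} ∩
      {K' : NonemptyCompacts G | ((K' : Set G) ∩ W₂).Nonempty}, ?_, ?_, ?_⟩
  · rintro K' ⟨⟨h1, h2⟩, h3⟩ ⟨H, hH⟩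
    obtain ⟨x, hxK, hxW⟩ := h2
    obtain ⟨y, hyK, hyW⟩ := h3
    have hxy : x * y⁻¹ ∈ (K' : Set G) := by
      rw [hH] at hxK hyK ⊢
      exact mul_mem hxK (inv_mem hyK)
    have hxyV : x * y⁻¹ ∈ V := hWV (Set.mk_mem_prod hxW hyW)
    exact hdis.ne_of_mem (h1 hxy) hxyV rfl
  · refine IsOpen.inter (IsOpen.inter ?_ ?_) ?_
    · exact TopologicalSpace.isOpen_generateFrom_of_mem (Or.inl ⟨U, hU, rfl⟩)
    · exact TopologicalSpace.isOpen_generateFrom_of_mem (Or.inr ⟨W₁, hW₁, rfl⟩)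
    · exact TopologicalSpace.isOpen_generateFrom_of_mem (Or.inr ⟨W₂, hW₂, rfl⟩)
  · exact ⟨⟨hKU, ⟨a, ha, haW₁⟩⟩, ⟨b, hb, hbW₂⟩⟩
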